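/- Let 𝒯 be a supercritical CA and let u be a unit vector. The following are equivalent: (1) there exist a line ℓ₀ ⊂ ℝ² through the point u/w(u) and δ > 0 such that ℓ₀ ∩ B(u/w(u), δ) ⊆ K_{1/w}; (2) there exist a point x_u ∈ ℓ_u ∩ 𝒩 and α > 0 such that every line ℓ obtained from ℓ_u by a rotation about x_u through a nonzero angle of absolute value less than α satisfies π_d(ℒ°(ℓ)) = 0. -/

import Mathlib

open MeasureTheory ProbabilityTheory Filter Topology Set
open scoped Pointwise ENNReal

noncomputable section

abbrev Pt : Type := EuclideanSpace ℝ (Fin 2)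

def mkPt (a b : ℝ) : Pt := (WithLp.equiv 2 (Fin 2 → ℝ)).symm ![a, b]

def toPt (z : ℤ × ℤ) : Pt := mkPt z.1 z.2

def lattice : Set Pt := Set.range toPt

structure CA where
  N : Set Pt
  finite : N.Finite
  subLat : N ⊆ lattice
  zeroMem : (0 : Pt) ∈ N
  negN : -N = N
  rule : Set Pt → Prop
  mono : ∀ ⦃S₁ S₂ : Set Pt⦄, S₁ ⊆ S₂ → rule S₁ → rule S₂
  notEmpty : ¬ rule ∅
  ruleSymm : ∀ S : Set Pt, rule (-S) ↔ rule S
  solid : ∀ S : Set Pt, (0 : Pt) ∈ S → rule S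

def CA.T (c : CA) (A : Set Pt) : Set Pt :=
  {x | x ∈ lattice ∧ c.rule (((fun a => a - x) '' A) ∩ c.N)}

def CA.Tbar (c : CA) (B : Set Pt) : Set Pt :=
  {x | c.rule ((((fun a => a - x) '' B) ∩ lattice) ∩ c.N)}

def Hminus (u : Pt) : Set Pt := {x | (inner ℝ x u : ℝ) ≤ 0}

def shiftSet (v : Pt) (S : Set Pt) : Set Pt := (fun x => x + v) '' S

def IsSpeed (c : CA) (w : Pt → ℝ) : Prop :=
  ∀ u : Pt, ‖u‖ = 1 → c.Tbar (Hminus u) = shiftSet (w u • u) (Hminus u)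

def Supercritical (w : Pt → ℝ) : Prop := ∀ u : Pt, ‖u‖ = 1 → 0 < w u

def FillsSpace (c : CA) (A : Set Pt) : Prop :=
  A ⊆ lattice ∧ ∀ x ∈ lattice, ∃ t : ℕ, x ∈ c.T^[t] A

def LocallyRegular (c : CA) : Prop :=
  ∀ A₀ : Set Pt, A₀.Finite → A₀ ⊆ lattice → ∃ C : ℝ, 0 < C ∧
    ∀ A : ℕ → Set Pt, A 0 = A₀ →
      (∀ s, A s ⊆ A (s + 1)) → (∀ s, A (s + 1) ⊆ A s ∪ c.T (A s)) →
      ∀ t : ℕ, ∀ x ∈ A t, (∀ y ∈ A₀, C ≤ dist x y) →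
        ∃ G : Set Pt, G.Finite ∧ G ⊆ A t ∧ G ⊆ Metric.closedBall x C ∧ FillsSpace c G

structure Perturbation (c : CA) where
  pr : Set Pt → ℝ
  nonneg : ∀ S, 0 ≤ pr S
  le_one : ∀ S, pr S ≤ 1
  mono : ∀ ⦃S₁ S₂ : Set Pt⦄, S₁ ⊆ S₂ → pr S₁ ≤ pr S₂
  empty : pr ∅ = 0
  prSymm : ∀ S, pr (-S) = pr S
  solid : ∀ S : Set Pt, (0 : Pt) ∈ S → pr S = 1
  p : ℝ
  p_pos : 0 < p
  p_min : ∀ S : Set Pt, S ⊆ c.N → 0 < pr S → p ≤ pr S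
  p_attained : ∃ S : Set Pt, S ⊆ c.N ∧ pr S = p
  compat : ∀ S : Set Pt, S ⊆ c.N → (c.rule S ↔ 0 < pr S)

def IsUniformIID {Ω : Type*} [MeasureSpace Ω] (U : ((ℤ × ℤ) × ℕ) → Ω → ℝ) : Prop :=
  (∀ i, Measurable (U i)) ∧
  iIndepFun U ℙ ∧
  ∀ i, Measure.map (U i) ℙ = volume.restrict (Set.Icc (0 : ℝ) 1)

def IsDyn {Ω : Type*} (c : CA) (P : Perturbation c) (U : ((ℤ × ℤ) × ℕ) → Ω → ℝ)
    (A : ℕ → Ω → Set Pt) : Prop :=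
  ∀ ω t, A (t + 1) ω =
    {x | ∃ z : ℤ × ℤ, toPt z = x ∧
      U (z, t) ω ≤ P.pr (((fun a => a - x) '' A t ω) ∩ c.N)}

def IsStdDyn {Ω : Type*} (c : CA) (p : ℝ) (U : ((ℤ × ℤ) × ℕ) → Ω → ℝ)
    (A : ℕ → Ω → Set Pt) : Prop :=
  ∀ ω t, A (t + 1) ω =
    A t ω ∪ {x | x ∈ c.T (A t ω) ∧ ∃ z : ℤ × ℤ, toPt z = x ∧ U (z, t) ω ≤ p}

def SpeedEvent (u : Pt) (wu ε : ℝ) (t : ℕ) (At : Set Pt) : Prop :=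
  shiftSet (((t : ℝ) * (wu - ε)) • u) (Hminus u) ∩ lattice ∩
      Metric.closedBall 0 ((t : ℝ) ^ 2) ⊆ At ∧
  At ∩ Metric.closedBall 0 ((t : ℝ) ^ 2) ⊆
      shiftSet (((t : ℝ) * (wu + ε)) • u) (Hminus u)

def Lset (w : Pt → ℝ) : Set Pt := {x | ∀ u : Pt, ‖u‖ = 1 → (inner ℝ x u : ℝ) ≤ w u}

def Kset (w : Pt → ℝ) : Set Pt :=
  {x | ∃ u : Pt, ‖u‖ = 1 ∧ ∃ r : ℝ, 0 ≤ r ∧ r ≤ (w u)⁻¹ ∧ x = r • u}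

def dKp (w : Pt → ℝ) : Set Pt :=
  frontier (Kset w) ∩ frontier (convexHull ℝ (Kset w))

def lineu (w : Pt → ℝ) (u : Pt) : Set Pt := {x | (inner ℝ x u : ℝ) = -(w u)}

def rot (β : ℝ) (v : Pt) : Pt :=
  mkPt (Real.cos β * v 0 - Real.sin β * v 1) (Real.sin β * v 0 + Real.cos β * v 1)

def lineSet (q n : Pt) : Set Pt := {x | (inner ℝ (x - q) n : ℝ) = 0}

def farOpen (Nset : Set Pt) (q n : Pt) : Set Pt :=
  {x ∈ Nset | 0 < (inner ℝ (x - q) n : ℝ) * (inner ℝ q n : ℝ)}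

def farClosed (Nset : Set Pt) (q n : Pt) : Set Pt :=
  {x ∈ Nset | 0 ≤ (inner ℝ (x - q) n : ℝ) * (inner ℝ q n : ℝ)}

def HasLDSpeed (c : CA) (P : Perturbation c) (wpi : Pt → ℝ) : Prop :=
  ∀ u : Pt, ‖u‖ = 1 → 0 < wpi u ∧
    ∀ (Ω : Type) [MeasureSpace Ω] [IsProbabilityMeasure (ℙ : Measure Ω)]
      (U : ((ℤ × ℤ) × ℕ) → Ω → ℝ), IsUniformIID U →
      ∀ A : ℕ → Ω → Set Pt, IsDyn c P U A → A 0 = (fun _ => Hminus u ∩ lattice) →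
      ∀ ε : ℝ, 0 < ε → ∃ cε : ℝ, 0 < cε ∧ ∀ t : ℕ, 1 ≤ t →
        ENNReal.ofReal (1 - Real.exp (-cε * t)) ≤ ℙ {ω | SpeedEvent u (wpi u) ε t (A t ω)}

def ext (M : ℤ) (κ : ℝ) (A : Set (ℤ × ℤ)) : Set (ℤ × ℤ) :=
  {q | (0 ≤ q.1 ∧ q.1 ≤ M - 1 ∧ q ∈ A) ∨
       (M ≤ q.1 ∧ q.1 ≤ 2 * M - 1 ∧ (q.1 - M, ⌊(q.2 : ℝ) - κ * M⌋) ∈ A) ∨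
       (-M ≤ q.1 ∧ q.1 < 0 ∧ (q.1 + M, ⌊(q.2 : ℝ) + κ * M⌋) ∈ A)}

def IsStripDyn {Ω : Type*} (c : CA) (P : Perturbation c) (M : ℤ) (κ : ℝ)
    (U : ((ℤ × ℤ) × ℕ) → Ω → ℝ) (A : ℕ → Ω → Set (ℤ × ℤ)) : Prop :=
  ∀ ω t, A (t + 1) ω =
    {q | 0 ≤ q.1 ∧ q.1 ≤ M - 1 ∧
      U (q, t) ω ≤ P.pr ((toPt '' ((fun r => r - q) '' ext M κ (A t ω))) ∩ c.N)}

def hgt1 (A : Set (ℤ × ℤ)) (M : ℤ) (κ : ℝ) : ℝ :=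
  sSup {r : ℝ | ∃ q ∈ A, 0 ≤ q.1 ∧ q.1 ≤ M - 1 ∧ r = κ * q.1 + q.2}

def hgt0 (A : Set (ℤ × ℤ)) (M : ℤ) (κ : ℝ) : ℝ :=
  sInf {r : ℝ | ∃ q : ℤ × ℤ, q ∉ A ∧ 0 ≤ q.1 ∧ q.1 ≤ M - 1 ∧ r = κ * q.1 + q.2}

def boxN (ρ : ℕ) : Finset (ℤ × ℤ) := Finset.Icc (-(ρ : ℤ), -(ρ : ℤ)) ((ρ : ℤ), (ρ : ℤ))

def cutCard (ρ : ℕ) (a b cc : ℝ) : ℕ :=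
  ((boxN ρ).filter (fun y => cc ≤ a * y.1 + b * y.2)).card

def lamSet (ρ : ℕ) (x : ℤ × ℤ) : Set ℕ :=
  {n | ∃ a b cc : ℝ, ¬(a = 0 ∧ b = 0) ∧ 0 < cc ∧ a * x.1 + b * x.2 = cc ∧ n = cutCard ρ a b cc}

def lamStar (ρ : ℕ) (x : ℤ × ℤ) : ℕ := sInf (lamSet ρ x)

open scoped Classical in
def IsSlowSurface {Ω : Type*} (b : ℤ × ℕ → Ω → Bool) (η : ℕ → Ω → ℤ → ℕ) : Prop :=
  (∀ ω x, η 0 ω x = 0) ∧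
  ∀ ω t x, η (t + 1) ω x =
    if b (x, t) ω = true ∧ ∀ y : ℤ, |y - x| ≤ 1 → η t ω x ≤ η t ω y
    then η t ω x + 1 else η t ω x

open scoped Classical in
def IsFastSurface {Ω : Type*} (b : ℤ × ℕ → Ω → Bool) (η : ℕ → Ω → ℤ → ℕ) : Prop :=
  (∀ ω x, η 0 ω x = 0) ∧
  ∀ ω t x, η (t + 1) ω x =
    if b (x, t) ω = true ∨ ∃ y : ℤ, |y - x| ≤ 1 ∧ η t ω x < η t ω y
    then η t ω x + 1 else η t ω x

def AdmissibleField {Ω : Type*} [MeasureSpace Ω] (p' : ℝ) (r : ℕ)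
    (b : ℤ × ℕ → Ω → Bool) : Prop :=
  (∀ i, Measurable (b i)) ∧
  (∀ i, ℙ {ω | b i ω = true} = ENNReal.ofReal p') ∧
  ∀ I : Finset (ℤ × ℕ),
    (∀ i ∈ I, ∀ j ∈ I, i ≠ j → i.2 ≠ j.2 ∨ (r : ℤ) < |i.1 - j.1|) →
    iIndepFun (fun i : I => b i.1) ℙ



lemma mkPt_apply0 (a b : ℝ) : mkPt a b 0 = a := rfl
lemma mkPt_apply1 (a b : ℝ) : mkPt a b 1 = b := rfl

lemma Pt.ext2 {x y : Pt} (h0 : x 0 = y 0) (h1 : x 1 = y 1) : x = y := by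
  apply PiLp.ext; intro i; fin_cases i <;> assumption

lemma inner_Pt (x y : Pt) : (inner ℝ x y : ℝ) = x 0 * y 0 + x 1 * y 1 := by
  rw [PiLp.inner_apply, Fin.sum_univ_two]; simp only [real_inner_eq_re_inner, RCLike.inner_apply, conj_trivial, RCLike.re_to_real]; ring

lemma norm_one_iff (x : Pt) : ‖x‖ = 1 ↔ x 0 ^ 2 + x 1 ^ 2 = 1 := by
  constructor
  · intro h
    have := real_inner_self_eq_norm_sq x
    rw [inner_Pt, h] at this; nlinarith
  · intro h
    have h2 : ‖x‖ ^ 2 = 1 := by rw [← real_inner_self_eq_norm_sq, inner_Pt]; nlinarith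
    nlinarith [norm_nonneg x]

def uperp (v : Pt) : Pt := mkPt (-(v 1)) (v 0)

lemma rot_eq (β : ℝ) (v : Pt) : rot β v = Real.cos β • v + Real.sin β • uperp v := by
  apply Pt.ext2 <;> simp [rot, uperp, mkPt] <;> ring

lemma rot_zero' (v : Pt) : rot 0 v = v := by
  apply Pt.ext2 <;> simp [rot, mkPt]

lemma inner_uperp_self (v : Pt) : (inner ℝ v (uperp v) : ℝ) = 0 := by
  rw [inner_Pt]; simp [uperp, mkPt]; ring

lemma inner_rot (y : Pt) (β : ℝ) (v : Pt) :
    (inner ℝ y (rot β v) : ℝ) = Real.cos β * (inner ℝ y v : ℝ) + Real.sin β * (inner ℝ y (uperp v) : ℝ) := by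
  rw [rot_eq, inner_add_right, real_inner_smul_right, real_inner_smul_right]

lemma norm_rot {v : Pt} (hv : ‖v‖ = 1) (β : ℝ) : ‖rot β v‖ = 1 := by
  rw [norm_one_iff] at hv ⊢
  simp only [rot, mkPt_apply0, mkPt_apply1]
  nlinarith [Real.sin_sq_add_cos_sq β]

lemma inner_uperp (y v : Pt) : (inner ℝ y (uperp v) : ℝ) = -(y 0 * v 1) + y 1 * v 0 := by
  have h0 : (uperp v) 0 = -(v 1) := rfl
  have h1 : (uperp v) 1 = v 0 := rfl
  rw [inner_Pt, h0, h1]; ring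

lemma norm_uperp {v : Pt} (hv : ‖v‖ = 1) : ‖uperp v‖ = 1 := by
  rw [norm_one_iff] at hv ⊢; simp [uperp, mkPt]; nlinarith

-- decomposition of a unit vector w.r.t. orthonormal basis (v, uperp v)
lemma decomp {v : Pt} (hv : ‖v‖ = 1) (x : Pt) :
    x = (inner ℝ x v : ℝ) • v + (inner ℝ x (uperp v) : ℝ) • uperp v := by
  rw [norm_one_iff] at hv
  have h0 : (uperp v) 0 = -(v 1) := rfl
  have h1 : (uperp v) 1 = v 0 := rfl
  apply Pt.ext2 <;> simp only [PiLp.add_apply, PiLp.smul_apply, smul_eq_mul, inner_Pt, h0, h1]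
  · linear_combination (-(x 0)) * hv
  · linear_combination (-(x 1)) * hv


lemma inner_self_one {v : Pt} (hv : ‖v‖ = 1) : (inner ℝ v v : ℝ) = 1 := by
  rw [real_inner_self_eq_norm_sq, hv]; norm_num

lemma star_lemma (c : CA) (w : Pt → ℝ) (hw : IsSpeed c w) {v : Pt} (hv : ‖v‖ = 1) (h : ℝ) :
    c.rule {y ∈ c.N | (inner ℝ y v : ℝ) ≤ -h} ↔ h ≤ w v := by
  have key := hw v hv
  have hmem : (h • v ∈ c.Tbar (Hminus v)) ↔ (h • v ∈ shiftSet (w v • v) (Hminus v)) := by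
    rw [key]
  have hvv : (inner ℝ v v : ℝ) = 1 := inner_self_one hv
  have hL : (h • v ∈ c.Tbar (Hminus v)) ↔ c.rule {y ∈ c.N | (inner ℝ y v : ℝ) ≤ -h} := by
    have hset : (((fun a => a - h • v) '' Hminus v) ∩ lattice) ∩ c.N
        = {y ∈ c.N | (inner ℝ y v : ℝ) ≤ -h} := by
      ext y
      simp only [Set.mem_inter_iff, Set.mem_image, Set.mem_setOf_eq, Hminus]
      constructor
      · rintro ⟨⟨⟨a, ha, rfl⟩, -⟩, hN⟩
        refine ⟨hN, ?_⟩
        have : (inner ℝ (a - h • v) v : ℝ) = inner ℝ a v - h := by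
          rw [inner_sub_left, real_inner_smul_left, hvv]; ring
        rw [this]; linarith
      · rintro ⟨hN, hy⟩
        refine ⟨⟨⟨y + h • v, ?_, by abel⟩, c.subLat hN⟩, hN⟩
        show (inner ℝ (y + h • v) v : ℝ) ≤ 0
        rw [inner_add_left, real_inner_smul_left, hvv]; linarith
    show c.rule _ ↔ _
    rw [hset]
  have hR : (h • v ∈ shiftSet (w v • v) (Hminus v)) ↔ h ≤ w v := by
    simp only [shiftSet, Set.mem_image, Hminus, Set.mem_setOf_eq]
    constructor
    · rintro ⟨a, ha, hay⟩
      have : a = h • v - w v • v := by rw [← hay]; abel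
      rw [this] at ha
      have : (inner ℝ (h • v - w v • v) v : ℝ) = h - w v := by
        rw [inner_sub_left, real_inner_smul_left, real_inner_smul_left, hvv]; ring
      rw [this] at ha; linarith
    · intro hle
      refine ⟨h • v - w v • v, ?_, by abel⟩
      show (inner ℝ (h • v - w v • v) v : ℝ) ≤ 0
      rw [inner_sub_left, real_inner_smul_left, real_inner_smul_left, hvv]; nlinarith
  rw [← hL, hmem, hR]

lemma ruleset_nonempty (c : CA) {S : Set Pt} (hS : c.rule S) : S.Nonempty := by
  rcases Set.eq_empty_or_nonempty S with h | h
  · exact absurd (h ▸ hS) c.notEmpty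
  · exact h

lemma strict_lemma (c : CA) (w : Pt → ℝ) (hw : IsSpeed c w) {v : Pt} (hv : ‖v‖ = 1) (h : ℝ) :
    c.rule {y ∈ c.N | (inner ℝ y v : ℝ) < -h} ↔ h < w v := by
  constructor
  · intro hr
    have hne : {y ∈ c.N | (inner ℝ y v : ℝ) < -h}.Nonempty := ruleset_nonempty c hr
    have hfin : {y ∈ c.N | (inner ℝ y v : ℝ) < -h}.Finite := c.finite.subset (fun y hy => hy.1)
    obtain ⟨m, hm, hmax⟩ := Set.Finite.exists_maximalFor (fun y => (inner ℝ y v : ℝ)) _ hfin hne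
    have hmax' : ∀ y ∈ {y ∈ c.N | (inner ℝ y v : ℝ) < -h}, (inner ℝ y v : ℝ) ≤ (inner ℝ m v : ℝ) := by
      intro y hy
      by_contra hlt
      push_neg at hlt
      exact absurd (hmax hy (le_of_lt hlt)) (not_le.mpr hlt)
    have hseteq : {y ∈ c.N | (inner ℝ y v : ℝ) < -h} = {y ∈ c.N | (inner ℝ y v : ℝ) ≤ -(-(inner ℝ m v : ℝ))} := by
      ext y
      simp only [Set.mem_setOf_eq, neg_neg]
      exact ⟨fun hy => ⟨hy.1, hmax' y hy⟩, fun hy => ⟨hy.1, lt_of_le_of_lt hy.2 hm.2⟩⟩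
    rw [hseteq] at hr
    have := (star_lemma c w hw hv _).mp hr
    linarith [hm.2, this]
  · intro hlt
    apply c.mono (S₁ := {y ∈ c.N | (inner ℝ y v : ℝ) ≤ -(w v)})
    · intro y hy
      exact ⟨hy.1, lt_of_le_of_lt hy.2 (by linarith)⟩
    · exact (star_lemma c w hw hv _).mpr le_rfl

lemma line_point_exists (c : CA) (w : Pt → ℝ) (hw : IsSpeed c w) {v : Pt} (hv : ‖v‖ = 1) :
    ∃ x ∈ c.N, (inner ℝ x v : ℝ) = -(w v) := by
  have hr : c.rule {y ∈ c.N | (inner ℝ y v : ℝ) ≤ -(w v)} :=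
    (star_lemma c w hw hv _).mpr le_rfl
  by_contra hno
  push_neg at hno
  have hsub : {y ∈ c.N | (inner ℝ y v : ℝ) ≤ -(w v)} = {y ∈ c.N | (inner ℝ y v : ℝ) < -(w v)} := by
    ext y
    simp only [Set.mem_setOf_eq]
    exact ⟨fun hy => ⟨hy.1, lt_of_le_of_ne hy.2 (hno y hy.1)⟩, fun hy => ⟨hy.1, le_of_lt hy.2⟩⟩
  rw [hsub] at hr
  exact absurd ((strict_lemma c w hw hv _).mp hr) (lt_irrefl _)

lemma Kset_extract (w : Pt → ℝ) (hsc : Supercritical w) {x : Pt} (hx : x ∈ Kset w) (hx0 : x ≠ 0) :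
    ‖(‖x‖⁻¹ • x)‖ = 1 ∧ w (‖x‖⁻¹ • x) ≤ ‖x‖⁻¹ := by
  obtain ⟨v, hv1, r, hr0, hr1, rfl⟩ := hx
  have hrne : r ≠ 0 := by rintro rfl; simp at hx0
  have hrpos : 0 < r := lt_of_le_of_ne hr0 (Ne.symm hrne)
  have hnorm : ‖r • v‖ = r := by rw [norm_smul, hv1, Real.norm_eq_abs, abs_of_pos hrpos, mul_one]
  have hunit : ‖r • v‖⁻¹ • (r • v) = v := by
    rw [hnorm, smul_smul, inv_mul_cancel₀ hrne, one_smul]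
  rw [hunit, hnorm]
  refine ⟨hv1, ?_⟩
  have hwv : 0 < w v := hsc v hv1
  have := inv_anti₀ hrpos hr1
  rwa [inv_inv] at this


set_option maxHeartbeats 1000000 in
lemma dir21 (c : CA) (w : Pt → ℝ) (hw : IsSpeed c w) (hsc : Supercritical w)
    (u : Pt) (hu : ‖u‖ = 1) (xu : Pt) (hxu : xu ∈ lineu w u ∩ c.N) (α : ℝ) (hα : 0 < α)
    (hrule : ∀ β : ℝ, β ≠ 0 → |β| < α → ¬ c.rule (farOpen c.N xu (rot β u))) :
    ∃ n : Pt, n ≠ 0 ∧ ∃ δ : ℝ, 0 < δ ∧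
      lineSet ((w u)⁻¹ • u) n ∩ Metric.ball ((w u)⁻¹ • u) δ ⊆ Kset w := by
  set W := w u with hWdef
  have hW : 0 < W := hsc u hu
  have hxuline : (inner ℝ xu u : ℝ) = -W := hxu.1
  have hxuN : xu ∈ c.N := hxu.2
  have hxune : xu ≠ 0 := by
    rintro rfl
    rw [inner_zero_left] at hxuline
    linarith
  set q : Pt := W⁻¹ • u with hqdef
  have hq_inner : (inner ℝ q xu : ℝ) = -1 := by
    rw [real_inner_smul_left, real_inner_comm, hxuline]
    field_simp
  -- α' and ε
  set α' : ℝ := min α (Real.pi / 2) with hα'def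
  have hα'pos : 0 < α' := lt_min hα (by positivity)
  have hα'le : α' ≤ α := min_le_left _ _
  have hα'pi2 : α' ≤ Real.pi / 2 := min_le_right _ _
  have hπ : 0 < Real.pi := Real.pi_pos
  have hcosα' : Real.cos α' < 1 := by
    have := Real.cos_lt_cos_of_nonneg_of_le_pi (le_refl 0) (by linarith) hα'pos
    rwa [Real.cos_zero] at this
  set ε : ℝ := Real.sqrt (2 - 2 * Real.cos α') with hεdef
  have hε2 : (0:ℝ) < 2 - 2 * Real.cos α' := by linarith
  have hεpos : 0 < ε := Real.sqrt_pos.mpr hε2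
  -- continuity of normalization at q
  have hqne : q ≠ 0 := by
    rintro h
    rw [h, inner_zero_left] at hq_inner; linarith
  have hφcont : ContinuousAt (fun x : Pt => ‖x‖⁻¹ • x) q := by
    exact (continuous_norm.continuousAt.inv₀ (norm_ne_zero_iff.mpr hqne)).smul continuousAt_id
  have hφq : ‖q‖⁻¹ • q = u := by
    have hnq : ‖q‖ = W⁻¹ := by
      rw [hqdef, norm_smul, Real.norm_eq_abs, abs_of_pos (by positivity), hu, mul_one]
    rw [hnq, hqdef, smul_smul, inv_inv, mul_inv_cancel₀ (ne_of_gt hW), one_smul]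
  obtain ⟨δ, hδpos, hδ⟩ := Metric.continuousAt_iff.mp hφcont ε hεpos
  refine ⟨xu, hxune, δ, hδpos, ?_⟩
  rintro x ⟨hxline, hxball⟩
  have hxxu : (inner ℝ x xu : ℝ) = -1 := by
    have : (inner ℝ (x - q) xu : ℝ) = 0 := hxline
    rw [inner_sub_left, hq_inner] at this
    linarith
  have hxne : x ≠ 0 := by
    rintro rfl
    rw [inner_zero_left] at hxxu; linarith
  set r : ℝ := ‖x‖ with hrdef
  have hr : 0 < r := norm_pos_iff.mpr hxne
  set v : Pt := ‖x‖⁻¹ • x with hvdef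
  have hv1 : ‖v‖ = 1 := by
    rw [hvdef, norm_smul, Real.norm_eq_abs, abs_of_pos (by positivity), ← hrdef,
      inv_mul_cancel₀ (ne_of_gt hr)]
  have hxuv : (inner ℝ xu v : ℝ) = -r⁻¹ := by
    rw [hvdef, real_inner_smul_right, real_inner_comm, hxxu, ← hrdef]
    ring
  have hdistvu : dist v u < ε := by
    have := hδ hxball
    rwa [hφq] at this
  set c₀ : ℝ := inner ℝ v u with hc₀def
  set s₀ : ℝ := inner ℝ v (uperp u) with hs₀def
  have hdecomp : v = c₀ • u + s₀ • uperp u := decomp hu v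
  have huu : (inner ℝ u u : ℝ) = 1 := inner_self_one hu
  have hupup : (inner ℝ (uperp u) (uperp u) : ℝ) = 1 := inner_self_one (norm_uperp hu)
  have huup : (inner ℝ u (uperp u) : ℝ) = 0 := inner_uperp_self u
  have hvv1 : (inner ℝ v v : ℝ) = 1 := inner_self_one hv1
  have huv : (inner ℝ u v : ℝ) = c₀ := by rw [hc₀def]; exact real_inner_comm v u
  have hupv : (inner ℝ (uperp u) v : ℝ) = s₀ := by rw [hs₀def]; exact real_inner_comm v (uperp u)
  have hcs : c₀ ^ 2 + s₀ ^ 2 = 1 := by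
    have hvv : (inner ℝ v v : ℝ) = 1 := inner_self_one hv1
    nth_rewrite 1 [hdecomp] at hvv
    rw [inner_add_left, real_inner_smul_left, real_inner_smul_left, huv, hupv] at hvv
    nlinarith [hvv]
  have hdist2 : dist v u ^ 2 = 2 - 2 * c₀ := by
    rw [dist_eq_norm, ← real_inner_self_eq_norm_sq, inner_sub_left, inner_sub_right,
      inner_sub_right, huu, ← hc₀def, huv, hvv1]
    ring
  have hc₀gt : Real.cos α' < c₀ := by
    have h1 : dist v u ^ 2 < ε ^ 2 := by
      have h0 : (0:ℝ) ≤ dist v u := dist_nonneg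
      nlinarith
    rw [hdist2, hεdef, Real.sq_sqrt (le_of_lt hε2)] at h1
    linarith
  have habs1 : |c₀| ≤ 1 := by
    rw [← sq_le_one_iff_abs_le_one]
    nlinarith [sq_nonneg s₀, hcs]
  have hc₀le : c₀ ≤ 1 := (abs_le.mp habs1).2
  have hc₀ge : -1 ≤ c₀ := (abs_le.mp habs1).1
  set β : ℝ := if 0 ≤ s₀ then Real.arccos c₀ else -Real.arccos c₀ with hβdef
  have hcosβ : Real.cos β = c₀ := by
    rw [hβdef]; split_ifs <;> simp [Real.cos_neg, Real.cos_arccos hc₀ge hc₀le]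
  have h1c : 1 - c₀ ^ 2 = s₀ ^ 2 := by linarith
  have hsinβ : Real.sin β = s₀ := by
    rw [hβdef]; split_ifs with hs
    · rw [Real.sin_arccos, h1c, Real.sqrt_sq_eq_abs, abs_of_nonneg hs]
    · push_neg at hs
      rw [Real.sin_neg, Real.sin_arccos, h1c, Real.sqrt_sq_eq_abs, abs_of_neg hs, neg_neg]
  have hrotv : rot β u = v := by
    rw [rot_eq, hcosβ, hsinβ]; exact hdecomp.symm
  have habsβ : |β| < α' := by
    have harc : Real.arccos c₀ < α' := by
      have h2 : Real.arccos c₀ < Real.arccos (Real.cos α') := by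
        apply Real.strictAntiOn_arccos _ _ hc₀gt
        · constructor <;> [linarith [Real.neg_one_le_cos α']; linarith [Real.cos_le_one α']]
        · exact ⟨hc₀ge, hc₀le⟩
      rwa [Real.arccos_cos (le_of_lt hα'pos) (by linarith)] at h2
    rw [hβdef]; split_ifs <;>
      [rwa [abs_of_nonneg (Real.arccos_nonneg c₀)];
       rwa [abs_neg, abs_of_nonneg (Real.arccos_nonneg c₀)]]
  have hwv : w v ≤ r⁻¹ := by
    by_cases hβ0 : β = 0
    · have hvu : v = u := by rw [← hrotv, hβ0, rot_zero']
      have : -r⁻¹ = -W := by rw [← hxuv, hvu, hxuline]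
      have hrW : r⁻¹ = W := by linarith
      rw [hvu, ← hWdef, ← hrW]
    · have hnd := hrule β hβ0 (lt_of_lt_of_le habsβ hα'le)
      rw [hrotv] at hnd
      have hset : farOpen c.N xu v = {y ∈ c.N | (inner ℝ y v : ℝ) < -r⁻¹} := by
        ext y
        simp only [farOpen, Set.mem_setOf_eq, Set.mem_sep_iff]
        constructor
        · rintro ⟨hyN, hy⟩
          refine ⟨hyN, ?_⟩
          rw [hxuv] at hy
          have h3 : (inner ℝ (y - xu) v : ℝ) < 0 := by
            by_contra hge
            push_neg at hge
            nlinarith [inv_pos.mpr hr]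
          rw [inner_sub_left, hxuv] at h3
          linarith
        · rintro ⟨hyN, hy⟩
          refine ⟨hyN, ?_⟩
          rw [hxuv, inner_sub_left, hxuv]
          have hrinv : 0 < r⁻¹ := inv_pos.mpr hr
          nlinarith
      rw [hset] at hnd
      by_contra hgt
      push_neg at hgt
      exact hnd ((strict_lemma c w hw hv1 r⁻¹).mpr hgt)
  refine ⟨v, hv1, r, le_of_lt hr, ?_, ?_⟩
  · have hwvpos : 0 < w v := hsc v hv1
    have := inv_anti₀ hwvpos hwv
    rwa [inv_inv] at this
  · rw [hvdef, smul_smul, ← hrdef, mul_inv_cancel₀ (ne_of_gt hr), one_smul]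


lemma rot_continuous (u : Pt) : Continuous fun β => rot β u := by
  have h : (fun β => rot β u) = fun β => Real.cos β • u + Real.sin β • uperp u :=
    funext fun β => rot_eq β u
  rw [h]
  exact (Real.continuous_cos.smul continuous_const).add
    (Real.continuous_sin.smul continuous_const)

set_option maxHeartbeats 2000000 in
lemma dir12 (c : CA) (w : Pt → ℝ) (hw : IsSpeed c w) (hsc : Supercritical w)
    (u : Pt) (hu : ‖u‖ = 1) (n₀ : Pt) (hδn : n₀ ≠ 0) (δ : ℝ) (hδ : 0 < δ)
    (hline : lineSet ((w u)⁻¹ • u) n₀ ∩ Metric.ball ((w u)⁻¹ • u) δ ⊆ Kset w) :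
    ∃ xu ∈ lineu w u ∩ c.N, ∃ α : ℝ, 0 < α ∧
      ∀ β : ℝ, β ≠ 0 → |β| < α → ¬ c.rule (farOpen c.N xu (rot β u)) := by
  set W := w u with hWdef
  have hW : 0 < W := hsc u hu
  set q : Pt := W⁻¹ • u with hqdef
  have hπ : 0 < Real.pi := Real.pi_pos
  have huu : (inner ℝ u u : ℝ) = 1 := inner_self_one hu
  -- Step 1: ⟪u,n₀⟫ ≠ 0
  have hun : (inner ℝ u n₀ : ℝ) ≠ 0 := by
    intro h0
    have hqn : (inner ℝ q n₀ : ℝ) = 0 := by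
      rw [hqdef, real_inner_smul_left, h0, mul_zero]
    set x : Pt := (W⁻¹ + δ/2) • u with hxdef
    have hxline : x ∈ lineSet q n₀ := by
      show (inner ℝ (x - q) n₀ : ℝ) = 0
      rw [inner_sub_left, hqn, hxdef, real_inner_smul_left, h0, mul_zero, sub_zero]
    have hxq : x - q = (δ/2) • u := by
      rw [hxdef, hqdef, ← sub_smul]; ring_nf
    have hxball : x ∈ Metric.ball q δ := by
      rw [Metric.mem_ball, dist_eq_norm, hxq, norm_smul, Real.norm_eq_abs,
        abs_of_pos (by linarith), hu, mul_one]
      linarith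
    have hxK := hline ⟨hxline, hxball⟩
    have hpos : (0:ℝ) < W⁻¹ + δ/2 := by positivity
    have hxnorm : ‖x‖ = W⁻¹ + δ/2 := by
      rw [hxdef, norm_smul, Real.norm_eq_abs, abs_of_pos hpos, hu, mul_one]
    have hxne : x ≠ 0 := by
      intro h; rw [h, norm_zero] at hxnorm; linarith
    obtain ⟨-, hle⟩ := Kset_extract w hsc hxK hxne
    rw [hxnorm] at hle
    have hunit : (W⁻¹ + δ/2)⁻¹ • x = u := by
      rw [hxdef, smul_smul, inv_mul_cancel₀ (ne_of_gt hpos), one_smul]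
    rw [hunit] at hle
    have h2 : (W⁻¹ + δ/2)⁻¹ < (W⁻¹)⁻¹ := by
      apply inv_strictAnti₀ (by positivity)
      linarith
    rw [inv_inv] at h2
    rw [← hWdef] at hle
    linarith
  -- p and its coordinates
  set p : Pt := (-(W / (inner ℝ u n₀ : ℝ))) • n₀ with hpdef
  have hpu : (inner ℝ p u : ℝ) = -W := by
    have hcomm : (inner ℝ n₀ u : ℝ) = (inner ℝ u n₀ : ℝ) := real_inner_comm u n₀
    rw [hpdef, real_inner_smul_left, hcomm, neg_mul, div_mul_cancel₀ _ hun]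
  set bp : ℝ := inner ℝ p (uperp u) with hbpdef
  -- Step 3: upper bound eventually
  have hrotcont : Continuous fun β => rot β u := rot_continuous u
  have hg : Continuous fun β => (inner ℝ (rot β u) n₀ : ℝ) :=
    hrotcont.inner continuous_const
  have hg0 : (inner ℝ (rot (0:ℝ) u) n₀ : ℝ) = (inner ℝ u n₀ : ℝ) := by rw [rot_zero']
  have hqn₀ : (inner ℝ q n₀ : ℝ) = W⁻¹ * (inner ℝ u n₀ : ℝ) := by
    rw [hqdef, real_inner_smul_left]
  have hgne : ∀ᶠ β in 𝓝 (0:ℝ), (inner ℝ (rot β u) n₀ : ℝ) ≠ 0 := by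
    have : Filter.Tendsto (fun β => (inner ℝ (rot β u) n₀ : ℝ)) (𝓝 0) (𝓝 (inner ℝ u n₀ : ℝ)) := by
      have := hg.tendsto (0:ℝ); rwa [hg0] at this
    exact this.eventually_ne hun
  set t : ℝ → ℝ := fun β => (inner ℝ q n₀ : ℝ) / (inner ℝ (rot β u) n₀ : ℝ) with htdef
  have htcont : ContinuousAt t 0 := by
    apply ContinuousAt.div continuousAt_const hg.continuousAt
    rw [hg0]; exact hun
  have ht0 : t 0 = W⁻¹ := by
    show (inner ℝ q n₀ : ℝ) / (inner ℝ (rot (0:ℝ) u) n₀ : ℝ) = W⁻¹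
    rw [rot_zero', hqn₀, mul_div_assoc, div_self hun, mul_one]
  have htpos : ∀ᶠ β in 𝓝 (0:ℝ), 0 < t β := by
    have h1 : ∀ᶠ s in 𝓝 (t 0), 0 < s := eventually_gt_nhds (by rw [ht0]; positivity)
    exact htcont.tendsto.eventually h1
  have hGcont : ContinuousAt (fun β => t β • rot β u) 0 :=
    htcont.smul hrotcont.continuousAt
  have hG0 : t 0 • rot (0:ℝ) u = q := by rw [ht0, rot_zero', hqdef]
  have hGball : ∀ᶠ β in 𝓝 (0:ℝ), t β • rot β u ∈ Metric.ball q δ := by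
    have h1 : ∀ᶠ y in 𝓝 q, y ∈ Metric.ball q δ :=
      Filter.eventually_mem_set.mpr (Metric.ball_mem_nhds q hδ)
    have h2 := hGcont.tendsto
    rw [hG0] at h2
    exact h2.eventually h1
  have hEp : ∀ᶠ β in 𝓝 (0:ℝ), w (rot β u) ≤ -(inner ℝ p (rot β u) : ℝ) := by
    filter_upwards [hgne, htpos, hGball] with β hgβ htβ hGβ
    set v : Pt := rot β u with hvdef
    have hv1 : ‖v‖ = 1 := norm_rot hu β
    set x : Pt := t β • v with hxdef
    have htβval : t β = (inner ℝ q n₀ : ℝ) / (inner ℝ v n₀ : ℝ) := rfl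
    have hxline : x ∈ lineSet q n₀ := by
      show (inner ℝ (x - q) n₀ : ℝ) = 0
      rw [inner_sub_left, hxdef, real_inner_smul_left, htβval,
        div_mul_cancel₀ _ hgβ, sub_self]
    have hxK := hline ⟨hxline, hGβ⟩
    have hxnorm : ‖x‖ = t β := by
      rw [hxdef, norm_smul, Real.norm_eq_abs, abs_of_pos htβ, hv1, mul_one]
    have hxne : x ≠ 0 := by
      intro h; rw [h, norm_zero] at hxnorm; linarith
    obtain ⟨-, hle⟩ := Kset_extract w hsc hxK hxne
    have hunit : ‖x‖⁻¹ • x = v := by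
      rw [hxnorm, hxdef, smul_smul, inv_mul_cancel₀ (ne_of_gt htβ), one_smul]
    rw [hunit, hxnorm] at hle
    have htinv : (t β)⁻¹ = -(inner ℝ p v : ℝ) := by
      have h2 : (inner ℝ p v : ℝ) = -(W / (inner ℝ u n₀ : ℝ)) * (inner ℝ v n₀ : ℝ) := by
        rw [hpdef, real_inner_smul_left, real_inner_comm n₀ v]
      rw [htβval, h2, hqn₀]
      set a : ℝ := (inner ℝ u n₀ : ℝ) with hadef
      set g : ℝ := (inner ℝ v n₀ : ℝ) with hgdef
      field_simp
      try ring
    rw [htinv] at hle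
    exact hle
  -- eventual strict separation for points strictly below the line
  have hE2 : ∀ᶠ β in 𝓝 (0:ℝ), ∀ y ∈ c.N, (inner ℝ y u : ℝ) < -W →
      (inner ℝ y (rot β u) : ℝ) < (inner ℝ p (rot β u) : ℝ) := by
    rw [Finite.eventually_all c.finite]
    intro y hy
    by_cases hcase : (inner ℝ y u : ℝ) < -W
    · have hcont : Continuous fun β => (inner ℝ (y - p) (rot β u) : ℝ) :=
        continuous_const.inner hrotcont
      have hval : (inner ℝ (y - p) (rot (0:ℝ) u) : ℝ) < 0 := by
        rw [rot_zero', inner_sub_left, hpu]; linarith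
      have h1 : ∀ᶠ β in 𝓝 (0:ℝ), (inner ℝ (y - p) (rot β u) : ℝ) < 0 := by
        have h2 := hcont.tendsto (0:ℝ)
        exact h2.eventually (eventually_lt_nhds hval)
      filter_upwards [h1] with β hβ hyu
      have := hβ
      rw [inner_sub_left] at this
      linarith
    · filter_upwards with β hyu
      exact absurd hyu hcase
  have hEπ : ∀ᶠ β in 𝓝 (0:ℝ), |β| < Real.pi := by
    have := eventually_abs_sub_lt (0:ℝ) hπ
    simpa using this
  -- Step 5.5 : the candidate set is nonempty
  have hCne : ∃ y, y ∈ c.N ∧ (inner ℝ y u : ℝ) = -W ∧ (inner ℝ y (uperp u) : ℝ) ≤ bp := by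
    by_contra hno
    push_neg at hno
    have hev := (hEp.and (hE2.and hEπ)).filter_mono (nhdsWithin_le_nhds (s := Set.Iio (0:ℝ)))
    have hmem : ∀ᶠ β in 𝓝[<] (0:ℝ), β ∈ Set.Iio (0:ℝ) := eventually_mem_nhdsWithin
    obtain ⟨β, ⟨hEpβ, hE2β, hEπβ⟩, hβneg⟩ := (hev.and hmem).exists
    rw [Set.mem_Iio] at hβneg
    have hsinβ : Real.sin β < 0 :=
      Real.sin_neg_of_neg_of_neg_pi_lt hβneg (by cases abs_lt.mp hEπβ with
        | intro h1 h2 => linarith)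
    set v : Pt := rot β u with hvdef
    have hv1 : ‖v‖ = 1 := norm_rot hu β
    have hSrule : c.rule {y ∈ c.N | (inner ℝ y u : ℝ) ≤ -W} :=
      (star_lemma c w hw hu W).mpr le_rfl
    have hsub : {y ∈ c.N | (inner ℝ y u : ℝ) ≤ -W} ⊆
        {y ∈ c.N | (inner ℝ y v : ℝ) < -(-(inner ℝ p v : ℝ))} := by
      rintro y ⟨hyN, hyle⟩
      refine ⟨hyN, ?_⟩
      rw [neg_neg]
      rcases lt_or_eq_of_le hyle with hlt | heq
      · exact hE2β y hyN hlt
      · have hbp : bp < (inner ℝ y (uperp u) : ℝ) := hno y hyN heq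
        rw [hvdef, inner_rot, inner_rot, heq, hpu, ← hbpdef]
        nlinarith [mul_lt_mul_of_neg_left hbp hsinβ]
    have hrule := c.mono hsub hSrule
    have := (strict_lemma c w hw hv1 (-(inner ℝ p v : ℝ))).mp hrule
    linarith
  obtain ⟨y₀, hy₀N, hy₀line, hy₀bp⟩ := hCne
  -- Step 6 : maximal candidate
  set C : Set Pt := {y ∈ c.N | (inner ℝ y u : ℝ) = -W ∧ (inner ℝ y (uperp u) : ℝ) ≤ bp} with hCdef
  have hCfin : C.Finite := c.finite.subset fun y hy => hy.1
  have hCne' : C.Nonempty := ⟨y₀, hy₀N, hy₀line, hy₀bp⟩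
  obtain ⟨xu₀, hxu₀C, hxu₀max⟩ :=
    Set.Finite.exists_maximalFor (fun y => (inner ℝ y (uperp u) : ℝ)) C hCfin hCne'
  set b₀ : ℝ := inner ℝ xu₀ (uperp u) with hb₀def
  have hxu₀N : xu₀ ∈ c.N := hxu₀C.1
  have hxu₀line : (inner ℝ xu₀ u : ℝ) = -W := hxu₀C.2.1
  have hb₀bp : b₀ ≤ bp := hxu₀C.2.2
  have hmax' : ∀ y ∈ C, (inner ℝ y (uperp u) : ℝ) ≤ b₀ := by
    intro y hy
    by_contra hlt
    push_neg at hlt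
    have := hxu₀max hy (le_of_lt hlt)
    rw [hb₀def] at hlt
    exact absurd this (not_le.mpr hlt)
  have hkey : ∀ y ∈ c.N, (inner ℝ y u : ℝ) = -W → b₀ < (inner ℝ y (uperp u) : ℝ) →
      bp < (inner ℝ y (uperp u) : ℝ) := by
    intro y hyN hyline hygt
    by_contra hle
    push_neg at hle
    exact absurd (hmax' y ⟨hyN, hyline, hle⟩) (not_le.mpr hygt)
  -- Step 7 : final eventually conditions
  have hE1 : ∀ᶠ β in 𝓝 (0:ℝ), ∀ y ∈ c.N, -W < (inner ℝ y u : ℝ) →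
      (inner ℝ xu₀ (rot β u) : ℝ) < (inner ℝ y (rot β u) : ℝ) := by
    rw [Finite.eventually_all c.finite]
    intro y hy
    by_cases hcase : -W < (inner ℝ y u : ℝ)
    · have hcont : Continuous fun β => (inner ℝ (xu₀ - y) (rot β u) : ℝ) :=
        continuous_const.inner hrotcont
      have hval : (inner ℝ (xu₀ - y) (rot (0:ℝ) u) : ℝ) < 0 := by
        rw [rot_zero', inner_sub_left, hxu₀line]; linarith
      have h1 := (hcont.tendsto (0:ℝ)).eventually (eventually_lt_nhds hval)
      filter_upwards [h1] with β hβ hyu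
      rw [inner_sub_left] at hβ
      linarith
    · filter_upwards with β hyu
      exact absurd hyu hcase
  have hE3 : ∀ᶠ β in 𝓝 (0:ℝ), (inner ℝ xu₀ (rot β u) : ℝ) < 0 := by
    have hcont : Continuous fun β => (inner ℝ xu₀ (rot β u) : ℝ) :=
      continuous_const.inner hrotcont
    have hval : (inner ℝ xu₀ (rot (0:ℝ) u) : ℝ) < 0 := by
      rw [rot_zero', hxu₀line]; linarith
    exact (hcont.tendsto (0:ℝ)).eventually (eventually_lt_nhds hval)
  obtain ⟨α, hαpos, hα⟩ := Metric.eventually_nhds_iff.mp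
    (hEp.and (hE2.and (hE1.and (hE3.and hEπ))))
  refine ⟨xu₀, ⟨hxu₀line, hxu₀N⟩, α, hαpos, ?_⟩
  intro β hβ0 hβα
  have hβ' : dist β 0 < α := by rwa [Real.dist_eq, sub_zero]
  obtain ⟨hEpβ, hE2β, hE1β, hE3β, hEπβ⟩ := hα hβ'
  set v : Pt := rot β u with hvdef
  have hv1 : ‖v‖ = 1 := norm_rot hu β
  intro hrule
  have hfar : farOpen c.N xu₀ v = {y ∈ c.N | (inner ℝ y v : ℝ) < (inner ℝ xu₀ v : ℝ)} := by
    ext y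
    simp only [farOpen, Set.mem_setOf_eq, Set.mem_sep_iff]
    constructor
    · rintro ⟨hyN, hy⟩
      refine ⟨hyN, ?_⟩
      have h3 : (inner ℝ (y - xu₀) v : ℝ) < 0 := by
        by_contra hge
        push_neg at hge
        nlinarith
      rw [inner_sub_left] at h3
      linarith
    · rintro ⟨hyN, hy⟩
      refine ⟨hyN, ?_⟩
      have h3 : (inner ℝ (y - xu₀) v : ℝ) < 0 := by
        rw [inner_sub_left]; linarith
      nlinarith
  rw [hfar] at hrule
  have hrule' : c.rule {y ∈ c.N | (inner ℝ y v : ℝ) < -(-(inner ℝ xu₀ v : ℝ))} := by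
    rwa [neg_neg]
  have hlt : -(inner ℝ xu₀ v : ℝ) < w v := (strict_lemma c w hw hv1 _).mp hrule'
  have hup : w v ≤ -(inner ℝ p v : ℝ) := hEpβ
  have hpxlt : (inner ℝ p v : ℝ) < (inner ℝ xu₀ v : ℝ) := by linarith
  have hpv : (inner ℝ p v : ℝ) = Real.cos β * (-W) + Real.sin β * bp := by
    rw [hvdef, inner_rot, hpu, ← hbpdef]
  have hxuv : (inner ℝ xu₀ v : ℝ) = Real.cos β * (-W) + Real.sin β * b₀ := by
    rw [hvdef, inner_rot, hxu₀line, ← hb₀def]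
  rcases lt_trichotomy β 0 with hβneg | hβzero | hβpos
  · -- β < 0
    have hsinβ : Real.sin β < 0 :=
      Real.sin_neg_of_neg_of_neg_pi_lt hβneg (by cases abs_lt.mp hEπβ with
        | intro h1 h2 => linarith)
    have hsub : {y ∈ c.N | (inner ℝ y v : ℝ) < (inner ℝ xu₀ v : ℝ)} ⊆
        {y ∈ c.N | (inner ℝ y v : ℝ) < -(-(inner ℝ p v : ℝ))} := by
      rintro y ⟨hyN, hylt⟩
      refine ⟨hyN, ?_⟩
      rw [neg_neg]
      rcases lt_trichotomy ((inner ℝ y u : ℝ)) (-W) with h | h | h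
      · exact hE2β y hyN h
      · have hyv : (inner ℝ y v : ℝ) = Real.cos β * (-W) + Real.sin β * (inner ℝ y (uperp u) : ℝ) := by
          rw [hvdef, inner_rot, h]
        have hb : b₀ < (inner ℝ y (uperp u) : ℝ) := by
          rw [hyv, hxuv] at hylt
          nlinarith
        have hbp2 : bp < (inner ℝ y (uperp u) : ℝ) := hkey y hyN h hb
        rw [hyv, hpv]
        nlinarith
      · exact absurd hylt (not_lt.mpr (le_of_lt (hE1β y hyN h)))
    have hrule2 := c.mono hsub hrule
    have := (strict_lemma c w hw hv1 (-(inner ℝ p v : ℝ))).mp hrule2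
    linarith
  · exact hβ0 hβzero
  · -- β > 0
    have hsinβ : 0 < Real.sin β :=
      Real.sin_pos_of_pos_of_lt_pi hβpos (by cases abs_lt.mp hEπβ with
        | intro h1 h2 => linarith [abs_of_pos hβpos])
    rw [hpv, hxuv] at hpxlt
    nlinarith


theorem stmt12 (c : CA) (w : Pt → ℝ) (hw : IsSpeed c w) (hsc : Supercritical w)
    (u : Pt) (hu : ‖u‖ = 1) :
    (∃ n : Pt, n ≠ 0 ∧ ∃ δ : ℝ, 0 < δ ∧
        lineSet ((w u)⁻¹ • u) n ∩ Metric.ball ((w u)⁻¹ • u) δ ⊆ Kset w) ↔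
    (∃ xu ∈ lineu w u ∩ c.N, ∃ α : ℝ, 0 < α ∧
        ∀ β : ℝ, β ≠ 0 → |β| < α → ¬ c.rule (farOpen c.N xu (rot β u))) := by
  constructor
  · rintro ⟨n, hn, δ, hδ, hline⟩
    exact dir12 c w hw hsc u hu n hn δ hδ hline
  · rintro ⟨xu, hxu, α, hα, hrule⟩
    exact dir21 c w hw hsc u hu xu hxu α hα hrule

end
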